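/- arXiv:1308.6044 — 3 statements merged into one kernel-verified Lean document; each statement's English description precedes it below -/
import Mathlib

section
/- Let (R, m) be a commutative Noetherian local ring of Krull dimension d ≥ 1 with m ∈ Ass_R(R) (equivalently, Γ_m(R) ≠ 0). Then there exists a system of parameters a_1, ..., a_d of R such that m ∈ Ass_R(R/(a_1, ..., a_i)) for every i with 1 ≤ i ≤ d. -/
open IsLocalRing

/-- Auxiliary: every chain of primes containing `I` has length at most `k`. -/
def ChainBound (R : Type*) [CommRing R] (I : Ideal R) (k : ℕ) : Prop :=
  ∀ s : LTSeries (PrimeSpectrum R), I ≤ s.head.asIdeal → s.length ≤ k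

lemma chainBound_step {R : Type*} [CommRing R] [IsNoetherianRing R] [IsLocalRing R]
    (I : Ideal R) (hI : I ≤ maximalIdeal R) (k : ℕ) (h : ChainBound R I (k + 1)) :
    ∃ a ∈ maximalIdeal R, ChainBound R (I ⊔ Ideal.span {a}) k := by
  by_cases hmm : maximalIdeal R ∈ I.minimalPrimes
  · refine ⟨0, zero_mem _, fun s hs => ?_⟩
    have hIs : I ≤ s.head.asIdeal := le_trans le_sup_left hs
    -- every prime over I equals the maximal ideal
    have key : ∀ p : PrimeSpectrum R, I ≤ p.asIdeal → p.asIdeal = maximalIdeal R := by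
      intro p hp
      have h1 : p.asIdeal ≤ maximalIdeal R := le_maximalIdeal p.isPrime.ne_top
      exact le_antisymm h1 (hmm.2 ⟨p.isPrime, hp⟩ h1)
    by_contra hlen
    have h1 : 0 < s.length := by omega
    have hlt : s.head < s.last := by
      apply s.strictMono
      rw [Fin.lt_def]
      simpa using h1
    have e0 : s.head.asIdeal = maximalIdeal R := key _ hIs
    have e1 : s.last.asIdeal = maximalIdeal R := by
      apply key
      exact hIs.trans (s.monotone (Fin.zero_le _))
    exact absurd (PrimeSpectrum.ext (e0.trans e1.symm)) (ne_of_lt hlt)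
  · -- prime avoidance
    have hfin : I.minimalPrimes.Finite := by
      rw [Ideal.minimalPrimes_eq_comap]
      exact (minimalPrimes.finite_of_isNoetherianRing (R ⧸ I)).image _
    have hnsub : ¬ ((maximalIdeal R : Set R) ⊆ ⋃ p ∈ (hfin.toFinset : Set (Ideal R)), (p : Set R)) := by
      rw [Ideal.subset_union_prime ⊤ ⊤ (fun p hp _ _ => by
        rw [Set.Finite.mem_toFinset] at hp; exact hp.1.1)]
      rintro ⟨p, hp, hle⟩
      rw [Set.Finite.mem_toFinset] at hp
      have hpm : p = maximalIdeal R := le_antisymm (le_maximalIdeal hp.1.1.ne_top) hle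
      exact hmm (hpm ▸ hp)
    rw [Set.not_subset] at hnsub
    obtain ⟨a, ham, hanot⟩ := hnsub
    refine ⟨a, ham, fun s hs => ?_⟩
    have hIhead : I ≤ s.head.asIdeal := le_trans le_sup_left hs
    obtain ⟨p, hp, hple⟩ := Ideal.exists_minimalPrimes_le (J := s.head.asIdeal) hIhead
    have hanp : a ∉ p := by
      intro hap
      exact hanot (Set.mem_biUnion (Set.Finite.mem_toFinset hfin |>.mpr hp) hap)
    have hahead : a ∈ s.head.asIdeal :=
      le_trans le_sup_right hs (Ideal.subset_span rfl)
    have hlt : (⟨p, hp.1.1⟩ : PrimeSpectrum R) < s.head := by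
      rw [← PrimeSpectrum.asIdeal_lt_asIdeal]
      refine lt_of_le_of_ne hple (fun e => hanp ?_)
      rw [show p = s.head.asIdeal from e]
      exact hahead
    have := h (s.cons ⟨p, hp.1.1⟩ hlt) (by rw [RelSeries.head_cons]; exact hp.1.2)
    rw [RelSeries.cons_length] at this
    omega

lemma exists_param_seq {R : Type*} [CommRing R] [IsNoetherianRing R] [IsLocalRing R] :
    ∀ (k : ℕ) (I : Ideal R), I ≤ maximalIdeal R → ChainBound R I k →
    ∃ b : ℕ → R, (∀ j, b j ∈ maximalIdeal R) ∧
      ChainBound R (I ⊔ Ideal.span (b '' {j | j < k})) 0 := by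
  intro k
  induction k with
  | zero =>
    intro I hI h
    refine ⟨0, fun j => zero_mem _, ?_⟩
    have : ({j : ℕ | j < 0} : Set ℕ) = ∅ := by ext j; simp
    rw [this, Set.image_empty, Ideal.span_empty, sup_bot_eq]
    exact h
  | succ k ih =>
    intro I hI h
    obtain ⟨a, ham, ha⟩ := chainBound_step I hI k h
    have hIa : I ⊔ Ideal.span {a} ≤ maximalIdeal R :=
      sup_le hI (Ideal.span_le.mpr (Set.singleton_subset_iff.mpr ham))
    obtain ⟨b', hb'm, hb'⟩ := ih (I ⊔ Ideal.span {a}) hIa ha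
    refine ⟨fun n => if n = 0 then a else b' (n - 1), fun j => ?_, ?_⟩
    · dsimp only; split
      · exact ham
      · exact hb'm _
    · have himg : (fun n => if n = 0 then a else b' (n - 1)) '' {j | j < k + 1}
          = insert a (b' '' {j | j < k}) := by
        ext y
        constructor
        · rintro ⟨j, hj, rfl⟩
          rcases Nat.eq_zero_or_pos j with rfl | hj0
          · left; simp
          · right
            refine ⟨j - 1, by simp only [Set.mem_setOf_eq] at hj ⊢; omega, ?_⟩
            simp [Nat.pos_iff_ne_zero.mp hj0]
        · rintro (rfl | ⟨t, ht, rfl⟩)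
          · exact ⟨0, by simp, by simp⟩
          · exact ⟨t + 1, by simp only [Set.mem_setOf_eq] at ht ⊢; omega, by simp⟩
      rw [himg, Ideal.span_insert, ← sup_assoc]
      exact hb'

theorem exists_sop_maximalIdeal_mem_associatedPrimes (R : Type*) [CommRing R] [IsNoetherianRing R] [IsLocalRing R]
    (d : ℕ) (hd : 1 ≤ d) (hdim : ringKrullDim R = d)
    (hm : maximalIdeal R ∈ associatedPrimes R R) :
    ∃ a : Fin d → R, (∀ i, a i ∈ maximalIdeal R) ∧
      (Ideal.span (Set.range a)).radical = maximalIdeal R ∧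
      ∀ i : ℕ, 1 ≤ i → i ≤ d →
        maximalIdeal R ∈ associatedPrimes R
          (R ⧸ Ideal.span (a '' {j : Fin d | (j : ℕ) < i})) := by
  obtain ⟨hmp, x, hxm⟩ := isAssociatedPrime_iff.mp hm
  rw [Submodule.bot_colon'] at hxm
  have hmne : maximalIdeal R ≠ ⊤ := hmp.ne_top
  have hx0 : x ≠ 0 := by
    rintro rfl
    have : (Submodule.span R ({(0 : R)} : Set R)).annihilator = ⊤ := by
      rw [Submodule.span_zero_singleton, Submodule.annihilator_bot]
    exact hmne (hxm.trans this)
  -- Krull intersection: find n ≥ 1 with x ∉ m ^ n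
  have hkrull : (⨅ n : ℕ, maximalIdeal R ^ n) = ⊥ :=
    Ideal.iInf_pow_eq_bot_of_isLocalRing _ hmne
  have hex : ∃ n : ℕ, x ∉ maximalIdeal R ^ n := by
    by_contra hc
    push_neg at hc
    exact hx0 (by simpa [hkrull] using Ideal.mem_iInf.mpr hc : x ∈ (⊥ : Ideal R))
  obtain ⟨n, hxn⟩ := hex
  have hn1 : 1 ≤ n := by
    rcases Nat.eq_zero_or_pos n with rfl | h
    · exact absurd (by simp : x ∈ maximalIdeal R ^ 0) hxn
    · exact h
  -- get the parameter sequence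
  have hcb : ChainBound R ⊥ d := by
    intro s _
    have := Order.LTSeries.length_le_krullDim s
    rw [show Order.krullDim (PrimeSpectrum R) = ringKrullDim R from rfl, hdim] at this
    exact_mod_cast this
  obtain ⟨b, hbm, hb0⟩ := exists_param_seq d ⊥ bot_le hcb
  rw [bot_sup_eq] at hb0
  set J : Ideal R := Ideal.span (b '' {j | j < d}) with hJ
  have hJle : J ≤ maximalIdeal R := Ideal.span_le.mpr (by rintro y ⟨j, _, rfl⟩; exact hbm j)
  -- radical J = m
  have hradJ : J.radical = maximalIdeal R := by
    rw [Ideal.radical_eq_sInf]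
    apply le_antisymm
    · exact sInf_le ⟨hJle, hmp⟩
    · refine le_sInf fun p ⟨hJp, hpp⟩ => ?_
      have hple : p ≤ maximalIdeal R := le_maximalIdeal hpp.ne_top
      by_contra hne
      have hlt : (⟨p, hpp⟩ : PrimeSpectrum R) < (⟨maximalIdeal R, hmp⟩ : PrimeSpectrum R) := by
        refine lt_of_le_of_ne hple ?_
        intro e
        exact hne (le_of_eq ((PrimeSpectrum.ext_iff.mp e).symm) |>.trans le_rfl)
      have hs := hb0 ((RelSeries.singleton _ (⟨maximalIdeal R, hmp⟩ : PrimeSpectrum R) : LTSeries (PrimeSpectrum R)).cons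
        ⟨p, hpp⟩ (show ((⟨p, hpp⟩ : PrimeSpectrum R), _) ∈ {(a, b) : PrimeSpectrum R × PrimeSpectrum R | a < b} from hlt)) (by rw [RelSeries.head_cons]; exact hJp)
      rw [RelSeries.cons_length] at hs
      simp at hs
  -- define a
  refine ⟨fun i => b i ^ n, fun i => Ideal.pow_mem_of_mem _ (hbm i) n hn1, ?_, ?_⟩
  · -- radical of span of powers equals m
    apply le_antisymm
    · have h1 : Ideal.span (Set.range fun i : Fin d => b ↑i ^ n) ≤ J := by
        rw [Ideal.span_le]
        rintro y ⟨i, rfl⟩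
        exact Ideal.pow_mem_of_mem _ (Ideal.subset_span (Set.mem_image_of_mem b (show (i : ℕ) ∈ {j : ℕ | j < d} from i.isLt))) n hn1
      calc (Ideal.span (Set.range fun i : Fin d => b ↑i ^ n)).radical
          ≤ J.radical := Ideal.radical_mono h1
        _ = maximalIdeal R := hradJ
    · rw [← hradJ]
      have h2 : J ≤ (Ideal.span (Set.range fun i : Fin d => b ↑i ^ n)).radical := by
        rw [Ideal.span_le]
        rintro y ⟨j, hj, rfl⟩
        exact Ideal.mem_radical_iff.mpr ⟨n, Ideal.subset_span (Set.mem_range_self (⟨j, hj⟩ : Fin d))⟩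
      calc J.radical ≤ (Ideal.span (Set.range fun i : Fin d => b ↑i ^ n)).radical.radical :=
            Ideal.radical_mono h2
        _ = _ := Ideal.radical_idem _
  · -- associated primes of quotients
    intro i _ _
    set K : Ideal R := Ideal.span ((fun i : Fin d => b ↑i ^ n) '' {j : Fin d | (j : ℕ) < i})
      with hK
    have hKle : K ≤ maximalIdeal R ^ n := by
      rw [Ideal.span_le]
      rintro y ⟨j, _, rfl⟩
      exact Ideal.pow_mem_pow (hbm j) n
    have hxK : x ∉ K := fun hc => hxn (hKle hc)
    refine isAssociatedPrime_iff.mpr ⟨hmp, Ideal.Quotient.mk K x, ?_⟩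
    rw [Submodule.bot_colon']
    apply le_antisymm
    · intro r hr
      rw [Submodule.mem_annihilator_span_singleton]
      have hrx : r * x = 0 := by
        have := hxm ▸ hr
        rwa [Submodule.mem_annihilator_span_singleton, smul_eq_mul] at this
      show r • (Ideal.Quotient.mk K x) = 0
      rw [Algebra.smul_def, Ideal.Quotient.algebraMap_eq, ← map_mul, hrx, map_zero]
    · intro r hr
      rw [Submodule.mem_annihilator_span_singleton] at hr
      by_contra hrm
      have hru : IsUnit r := by
        by_contra hnu
        exact hrm (IsLocalRing.mem_maximalIdeal r |>.mpr hnu)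
      obtain ⟨u, rfl⟩ := hru
      have : (Ideal.Quotient.mk K) ((u : R) * x) = 0 := by
        rw [map_mul, ← Ideal.Quotient.algebraMap_eq, ← Algebra.smul_def]
        exact hr
      rw [Ideal.Quotient.eq_zero_iff_mem] at this
      exact hxK (by
        have : (u⁻¹ : Rˣ) • ((u : R) * x) ∈ K := K.smul_mem _ this
        rwa [Units.smul_def, smul_eq_mul, ← mul_assoc, Units.inv_mul, one_mul] at this)
end

section
/- Let (R, m) be a commutative Noetherian local ring of Krull dimension d ≥ 1. Suppose that for every system of parameters a_1, ..., a_d of R, the element a_d is a regular element (non-zerodivisor) on R/(a_1, ..., a_{d-1}). Then m ∉ Ass_R(R). -/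
open IsLocalRing

lemma exists_param_list (R : Type*) [CommRing R] [IsNoetherianRing R] [IsLocalRing R] (d : ℕ)
    (hlen : ∀ c : LTSeries (PrimeSpectrum R), c.length ≤ d) :
    ∀ k : ℕ, k ≤ d → ∃ a : Fin k → R, (∀ i, a i ∈ maximalIdeal R) ∧
      ∀ c : LTSeries (PrimeSpectrum R),
        Ideal.span (Set.range a) ≤ c.head.asIdeal → c.length ≤ d - k := by
  intro k
  induction k with
  | zero =>
    intro _
    exact ⟨Fin.elim0, fun i => i.elim0, fun c _ => by simpa using hlen c⟩
  | succ k ih =>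
    intro hk
    obtain ⟨a, ha, hbound⟩ := ih (by omega)
    set I : Ideal R := Ideal.span (Set.range a) with hI
    by_cases hm : ∀ p : Ideal R, p.IsPrime → I ≤ p → p = maximalIdeal R
    · -- pad with 0
      refine ⟨Fin.cons 0 a, ?_, ?_⟩
      · intro i
        refine Fin.cases ?_ ?_ i
        · exact Ideal.zero_mem _
        · exact fun j => ha j
      · intro c hc
        -- every prime containing I is the maximal ideal, so chain length 0
        have hle : I ≤ c.head.asIdeal := by
          refine le_trans ?_ hc
          rw [hI]
          apply Ideal.span_mono
          rintro x ⟨i, rfl⟩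
          exact ⟨i.succ, by simp⟩
        have hhead : c.head.asIdeal = maximalIdeal R :=
          hm _ c.head.isPrime hle
        have hlast : c.last.asIdeal = maximalIdeal R :=
          hm _ c.last.isPrime (le_trans hle ((PrimeSpectrum.asIdeal_le_asIdeal _ _).2 c.head_le_last))
        by_contra hcon
        have hpos : 0 < c.length := by omega
        have hlt : c.head < c.last := by
          have := c.strictMono (show (⟨0, by omega⟩ : Fin (c.length + 1)) < ⟨c.length, by omega⟩ by
            simp [Fin.lt_def, hpos])
          exact this
        rw [← PrimeSpectrum.asIdeal_lt_asIdeal, hhead, hlast] at hlt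
        exact lt_irrefl _ hlt
    · push_neg at hm
      obtain ⟨p, hp, hIp, hpm⟩ := hm
      -- minimal primes over I are finite and none contains the maximal ideal
      have hfin : I.minimalPrimes.Finite := by
        rw [Ideal.minimalPrimes_eq_comap]
        exact ((minimalPrimes.finite_of_isNoetherianRing (R ⧸ I)).image _)
      have hnotle : ∀ q ∈ I.minimalPrimes, ¬ maximalIdeal R ≤ q := by
        intro q hq hle
        have hqprime : q.IsPrime := hq.1.1
        have hqm : q = maximalIdeal R :=
          le_antisymm (le_maximalIdeal hqprime.ne_top) hle
        obtain ⟨q', hq', hq'p⟩ := Ideal.exists_minimalPrimes_le (J := p) hIp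
        have : q ≤ q' := hq.2 hq'.1 (le_trans hq'p (le_maximalIdeal hp.ne_top) |>.trans hqm.ge)
        exact hpm (le_antisymm (le_maximalIdeal hp.ne_top) (hqm ▸ this.trans hq'p))
      -- prime avoidance
      classical
      have hsub : ¬ ((maximalIdeal R : Set R) ⊆ ⋃ q ∈ (hfin.toFinset : Set (Ideal R)), (q : Set R)) := by
        intro hcon
        rw [Ideal.subset_union_prime ⊥ ⊥ (fun q hq _ _ => (hfin.mem_toFinset.1 hq).1.1)] at hcon
        obtain ⟨q, hq, hle⟩ := hcon
        exact hnotle q (hfin.mem_toFinset.1 hq) hle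
      rw [Set.not_subset] at hsub
      obtain ⟨y, hym, hy⟩ := hsub
      refine ⟨Fin.cons y a, ?_, ?_⟩
      · intro i
        refine Fin.cases ?_ ?_ i
        · exact hym
        · exact fun j => ha j
      · intro c hc
        have hyc : y ∈ c.head.asIdeal := hc (Ideal.subset_span ⟨0, by simp⟩)
        have hIc : I ≤ c.head.asIdeal := by
          refine le_trans ?_ hc
          rw [hI]
          apply Ideal.span_mono
          rintro x ⟨i, rfl⟩
          exact ⟨i.succ, by simp⟩
        obtain ⟨q, hq, hqle⟩ := Ideal.exists_minimalPrimes_le (J := c.head.asIdeal) hIc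
        have hylt : q < c.head.asIdeal := by
          refine lt_of_le_of_ne hqle (fun he => ?_)
          have : y ∉ q := fun hyq => hy
            (Set.mem_biUnion (show q ∈ (↑hfin.toFinset : Set (Ideal R)) from hfin.mem_toFinset.2 hq) hyq)
          exact this (he ▸ hyc)
        set qp : PrimeSpectrum R := ⟨q, hq.1.1⟩ with hqp
        have hlt : qp < c.head := by
          rw [← PrimeSpectrum.asIdeal_lt_asIdeal]
          exact hylt
        have := hbound (c.cons qp hlt) (by
          rw [RelSeries.head_cons]
          exact hq.1.2)
        simp only [RelSeries.cons_length] at this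
        omega
    
theorem maximalIdeal_not_mem_associatedPrimes_of_sop_regular (R : Type*) [CommRing R] [IsNoetherianRing R] [IsLocalRing R]
    (d : ℕ) (hd : 1 ≤ d) (hdim : ringKrullDim R = d)
    (h : ∀ a : Fin d → R, (∀ i, a i ∈ maximalIdeal R) →
      (Ideal.span (Set.range a)).radical = maximalIdeal R →
      IsSMulRegular (R ⧸ Ideal.span (a '' {j : Fin d | (j : ℕ) < d - 1}))
        (a ⟨d - 1, by omega⟩)) :
    maximalIdeal R ∉ associatedPrimes R R := by
  intro hmem
  obtain ⟨hp, x, hx⟩ := isAssociatedPrime_iff.1 hmem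
  rw [Submodule.bot_colon'] at hx
  -- x is nonzero
  have hx0 : x ≠ 0 := by
    rintro rfl
    rw [Submodule.span_zero_singleton, Submodule.annihilator_bot] at hx
    exact hp.ne_top hx
  -- Krull intersection gives n with x ∉ m^n
  have hKrull : (⨅ n : ℕ, maximalIdeal R ^ n) = ⊥ :=
    Ideal.iInf_pow_eq_bot_of_isLocalRing _ (Ideal.IsPrime.ne_top hp)
  have hn : ∃ n : ℕ, x ∉ maximalIdeal R ^ n := by
    by_contra hcon
    push_neg at hcon
    have : x ∈ (⨅ n : ℕ, maximalIdeal R ^ n) := Ideal.mem_iInf.2 hcon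
    rw [hKrull] at this
    exact hx0 this
  obtain ⟨n, hxn⟩ := hn
  have hn1 : 1 ≤ n := by
    by_contra hcon
    interval_cases n
    simp [Ideal.one_eq_top] at hxn
  -- get a system of parameters
  have hlen : ∀ c : LTSeries (PrimeSpectrum R), c.length ≤ d := by
    intro c
    have := Order.LTSeries.length_le_krullDim c
    rw [show Order.krullDim (PrimeSpectrum R) = ringKrullDim R from rfl, hdim] at this
    exact_mod_cast this
  obtain ⟨b, hb, hbbound⟩ := exists_param_list R d hlen d le_rfl
  have hbrad : (Ideal.span (Set.range b)).radical = maximalIdeal R := by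
    rw [Ideal.radical_eq_sInf]
    have hset : {J : Ideal R | Ideal.span (Set.range b) ≤ J ∧ J.IsPrime} = {maximalIdeal R} := by
      ext J
      simp only [Set.mem_setOf_eq, Set.mem_singleton_iff]
      constructor
      · rintro ⟨hJle, hJp⟩
        by_contra hne
        have hJm : J < maximalIdeal R :=
          lt_of_le_of_ne (le_maximalIdeal hJp.ne_top) hne
        have hJm' : (⟨J, hJp⟩ : PrimeSpectrum R) < ⟨maximalIdeal R, inferInstance⟩ := by
          rw [← PrimeSpectrum.asIdeal_lt_asIdeal]; exact hJm
        have := hbbound ((RelSeries.singleton _ ⟨maximalIdeal R, inferInstance⟩).cons ⟨J, hJp⟩ (by rw [RelSeries.head_singleton]; exact hJm'))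
          (by rw [RelSeries.head_cons]; exact hJle)
        simp at this
      · rintro rfl
        refine ⟨Ideal.span_le.2 ?_, inferInstance⟩
        rintro z ⟨i, rfl⟩
        exact hb i
    rw [hset, sInf_singleton]
  -- the power system of parameters
  set a : Fin d → R := fun i => b i ^ n with hadef
  have ham : ∀ i, a i ∈ maximalIdeal R := fun i => Ideal.pow_mem_of_mem _ (hb i) n hn1
  have harad : (Ideal.span (Set.range a)).radical = maximalIdeal R := by
    have h1 : Ideal.span (Set.range a) ≤ Ideal.span (Set.range b) := by
      rw [Ideal.span_le]
      rintro z ⟨i, rfl⟩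
      exact Ideal.pow_mem_of_mem _ (Ideal.subset_span (Set.mem_range_self i)) n hn1
    have h2 : Ideal.span (Set.range b) ≤ (Ideal.span (Set.range a)).radical := by
      rw [Ideal.span_le]
      rintro z ⟨i, rfl⟩
      exact Ideal.mem_radical_iff.mpr ⟨n, Ideal.subset_span (Set.mem_range_self i)⟩
    refine le_antisymm ?_ ?_
    · rw [← hbrad]; exact Ideal.radical_mono h1
    · rw [← hbrad]
      exact (Ideal.radical_mono h2).trans_eq (Ideal.radical_idem _)
  have hreg := h a ham harad
  set J : Ideal R := Ideal.span (a '' {j : Fin d | (j : ℕ) < d - 1}) with hJ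
  have hJle : J ≤ maximalIdeal R ^ n := by
    rw [hJ, Ideal.span_le]
    rintro z ⟨i, _, rfl⟩
    exact Ideal.pow_mem_pow (hb i) n
  have hxJ : x ∉ J := fun hxJ => hxn (hJle hxJ)
  -- derive contradiction from regularity
  set r : R := a ⟨d - 1, by omega⟩ with hr
  have hrm : r ∈ maximalIdeal R := ham _
  have hrx : r * x = 0 := by
    have : r ∈ (Submodule.span R {x}).annihilator := hx ▸ hrm
    rw [Submodule.mem_annihilator_span_singleton] at this
    simpa using this
  have h1 : r • (Ideal.Quotient.mk J x) = r • (0 : R ⧸ J) := by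
    rw [smul_zero]
    have : r • Ideal.Quotient.mk J x = Ideal.Quotient.mk J (r • x) := rfl
    rw [this, smul_eq_mul, hrx, map_zero]
  have := hreg h1
  rw [← Ideal.Quotient.eq_zero_iff_mem] at hxJ
  exact hxJ this
end

section
/- Let (R, m) be a commutative Noetherian local ring of Krull dimension 1. Suppose that for every element b ∈ m with √(b) = m and every integer s ≥ 1, the R-module Hom_R(R/(b), R/(b^s)) is isomorphic to R/(b). Then R is a Cohen-Macaulay ring, i.e., m ∉ Ass_R(R). -/
open IsLocalRing

section Aux
variable {R : Type*} [CommRing R] [IsNoetherianRing R] [IsLocalRing R]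

lemma aux_not_all_primes_eq (hdim : ringKrullDim R = 1)
    (hall : ∀ p : PrimeSpectrum R, p.asIdeal = maximalIdeal R) : False := by
  have hsub : Subsingleton (PrimeSpectrum R) :=
    ⟨fun p q => PrimeSpectrum.ext (by rw [hall p, hall q])⟩
  have h0 : ringKrullDim R ≤ 0 := Order.krullDim_nonpos_of_subsingleton
  rw [hdim] at h0
  norm_num at h0

lemma aux_exists_param (hdim : ringKrullDim R = 1) :
    ∃ b ∈ maximalIdeal R, (Ideal.span {b}).radical = maximalIdeal R := by
  classical
  have hfin : (minimalPrimes R).Finite := minimalPrimes.finite_of_isNoetherianRing R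
  have hm_not : ∀ p ∈ minimalPrimes R, ¬ maximalIdeal R ≤ p := by
    intro p hp hle
    have hprime : p.IsPrime := hp.1.1
    have hpm : p = maximalIdeal R := le_antisymm (le_maximalIdeal hprime.ne_top) hle
    subst hpm
    exact aux_not_all_primes_eq hdim (fun q =>
      le_antisymm (le_maximalIdeal q.2.ne_top)
        (hp.2 ⟨q.2, bot_le⟩ (le_maximalIdeal q.2.ne_top)))
  have havoid := Ideal.subset_union_prime (s := hfin.toFinset) (f := id) (⊥ : Ideal R) ⊥
    (fun i hi _ _ => (hfin.mem_toFinset.mp hi).1.1) (I := maximalIdeal R)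
  have hnot : ¬ ((maximalIdeal R : Set R) ⊆ ⋃ i ∈ (hfin.toFinset : Set (Ideal R)), (id i : Ideal R)) := by
    rw [havoid]
    rintro ⟨p, hps, hple⟩
    exact hm_not p (hfin.mem_toFinset.mp hps) hple
  rw [Set.not_subset] at hnot
  obtain ⟨b, hbm, hb⟩ := hnot
  have hbmin : ∀ p ∈ minimalPrimes R, b ∉ p := by
    intro p hp hbp
    exact hb (Set.mem_biUnion (hfin.mem_toFinset.mpr hp) hbp)
  refine ⟨b, hbm, ?_⟩
  rw [Ideal.radical_eq_sInf]
  apply le_antisymm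
  · exact sInf_le ⟨(Ideal.span_singleton_le_iff_mem _).mpr hbm, inferInstance⟩
  · refine le_sInf ?_
    rintro J ⟨hbJ, hJp⟩
    by_contra hJm
    have hJltm : J < maximalIdeal R :=
      lt_of_le_of_ne (le_maximalIdeal hJp.ne_top) (fun hh => hJm (hh ▸ le_refl _))
    obtain ⟨q, hqmin, hqJ⟩ := Ideal.exists_minimalPrimes_le (bot_le : (⊥ : Ideal R) ≤ J)
    have hqJ' : q < J := by
      rcases lt_or_eq_of_le hqJ with h | h
      · exact h
      · exact absurd (h ▸ (hbJ (Ideal.subset_span rfl))) (hbmin q hqmin)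
    -- build a chain of length 2
    let P0 : PrimeSpectrum R := ⟨q, hqmin.1.1⟩
    let P1 : PrimeSpectrum R := ⟨J, hJp⟩
    let P2 : PrimeSpectrum R := ⟨maximalIdeal R, inferInstance⟩
    let ch : LTSeries (PrimeSpectrum R) :=
      { length := 2
        toFun := ![P0, P1, P2]
        step := by
          intro i
          fin_cases i
          · exact hqJ'
          · exact hJltm }
    have hle := Order.LTSeries.length_le_krullDim ch
    rw [show (ringKrullDim R) = Order.krullDim (PrimeSpectrum R) from rfl] at hdim
    rw [hdim] at hle
    norm_num [ch] at hle

lemma aux_ann_stab (b : R) :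
    ∃ N : ℕ, 1 ≤ N ∧ ∀ w : R, w * b ^ (2 * N) = 0 → w * b ^ N = 0 := by
  have hmono : Monotone (fun n => (Submodule.span R {b ^ n}).annihilator) := by
    intro n m hnm
    intro w hw
    rw [Submodule.mem_annihilator_span_singleton, smul_eq_mul] at hw ⊢
    obtain ⟨k, rfl⟩ := Nat.exists_eq_add_of_le hnm
    rw [pow_add, ← mul_assoc, hw, zero_mul]
  obtain ⟨n, hn⟩ := monotone_stabilizes_iff_noetherian.mpr
    (inferInstance : IsNoetherian R R) ⟨_, hmono⟩
  refine ⟨n + 1, le_add_self, ?_⟩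
  intro w hw
  have h1 : (Submodule.span R {b ^ (n+1)}).annihilator
      = (Submodule.span R {b ^ (2*(n+1))}).annihilator :=
    (hn (n+1) (by omega)).symm.trans (hn (2*(n+1)) (by omega))
  have hw' : w ∈ (Submodule.span R {b ^ (2*(n+1))}).annihilator := by
    rw [Submodule.mem_annihilator_span_singleton, smul_eq_mul]
    exact hw
  rw [← h1, Submodule.mem_annihilator_span_singleton, smul_eq_mul] at hw'
  exact hw'

end Aux

theorem not_mem_associatedPrimes_of_dim_one_hom_iso (R : Type*) [CommRing R] [IsNoetherianRing R] [IsLocalRing R]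
    (hdim : ringKrullDim R = 1)
    (h : ∀ b ∈ maximalIdeal R, (Ideal.span {b}).radical = maximalIdeal R →
      ∀ s : ℕ, 1 ≤ s →
        Nonempty (((R ⧸ Ideal.span {b}) →ₗ[R] (R ⧸ Ideal.span {b ^ s})) ≃ₗ[R]
          (R ⧸ Ideal.span {b}))) :
    maximalIdeal R ∉ associatedPrimes R R := by
  intro hass
  obtain ⟨hprime, x, hx⟩ := isAssociatedPrime_iff.mp hass
  have hx0 : x ≠ 0 := by
    rintro rfl
    rw [Submodule.colon_singleton_zero] at hx
    exact hprime.ne_top hx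
  obtain ⟨b, hbm, hbrad⟩ := aux_exists_param hdim
  obtain ⟨N, hN1, hstab⟩ := aux_ann_stab b
  set c := b ^ N with hc
  have hcm : c ∈ maximalIdeal R := Ideal.pow_mem_of_mem _ hbm N (by omega)
  have hcrad : (Ideal.span {c}).radical = maximalIdeal R := by
    rw [hc, ← Ideal.span_singleton_pow, Ideal.radical_pow (I := Ideal.span {b}) (n := N) (by omega)]
    exact hbrad
  obtain ⟨e⟩ := h c hcm hcrad 2 one_le_two
  set I := Ideal.span {c} with hI
  set J := Ideal.span {c ^ 2} with hJ
  -- basic facts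
  have hstab2 : ∀ w : R, w * c ^ 2 = 0 → w * c = 0 := by
    intro w hw
    rw [hc, ← pow_mul, mul_comm N 2] at hw
    exact hstab w hw
  have hc0 : c ≠ 0 := by
    intro h0
    apply aux_not_all_primes_eq hdim
    intro p
    refine le_antisymm (le_maximalIdeal p.2.ne_top) ?_
    rw [← hcrad]
    refine (Ideal.IsPrime.radical_le_iff p.2).mpr ?_
    rw [Ideal.span_le]
    simp [h0]
  have hann : ∀ w : R, w * c = 0 → w ∈ maximalIdeal R := by
    intro w hw
    by_contra hwm
    have hu : IsUnit w := by
      rw [IsLocalRing.mem_maximalIdeal, mem_nonunits_iff, not_not] at hwm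
      exact hwm
    exact hc0 ((hu.mul_right_eq_zero).mp hw)
  -- ψ and y
  set ψ := e.symm (Ideal.Quotient.mk I 1) with hψ
  obtain ⟨y, hy⟩ := Ideal.Quotient.mk_surjective (ψ (Ideal.Quotient.mk I 1))
  have hmk_smul : ∀ r : R, r • (Ideal.Quotient.mk I (1:R)) = Ideal.Quotient.mk I r := by
    intro r
    rw [← Ideal.Quotient.mk_eq_mk, ← Ideal.Quotient.mk_eq_mk, ← Submodule.Quotient.mk_smul,
      smul_eq_mul, mul_one]
  have hsm : ∀ r : R, r • ψ = e.symm (Ideal.Quotient.mk I r) := by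
    intro r
    rw [hψ, ← map_smul, hmk_smul]
  have happ : ∀ t : R, ψ (Ideal.Quotient.mk I t) = Ideal.Quotient.mk J (t * y) := by
    intro t
    rw [← hmk_smul t, map_smul, ← hy, ← Ideal.Quotient.mk_eq_mk, ← Submodule.Quotient.mk_smul,
      smul_eq_mul, Ideal.Quotient.mk_eq_mk]
  have hcy : c * y ∈ J := by
    have h1 := happ c
    rw [Ideal.Quotient.eq_zero_iff_mem.mpr (Ideal.subset_span rfl : c ∈ I), map_zero] at h1
    exact Ideal.Quotient.eq_zero_iff_mem.mp h1.symm
  have key1 : ∀ r : R, r * y ∈ J → r ∈ I := by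
    intro r hr
    have hz : r • ψ = 0 := by
      apply LinearMap.ext
      intro z
      obtain ⟨t, rfl⟩ := Ideal.Quotient.mk_surjective z
      rw [LinearMap.smul_apply, happ t, LinearMap.zero_apply, ← Ideal.Quotient.mk_eq_mk,
        ← Submodule.Quotient.mk_smul, smul_eq_mul, Ideal.Quotient.mk_eq_mk]
      refine Ideal.Quotient.eq_zero_iff_mem.mpr ?_
      have : r * (t * y) = t * (r * y) := by ring
      rw [show r * (t * y) = t * (r * y) by ring]
      exact J.mul_mem_left t hr
    rw [hsm r] at hz
    have h2 : Ideal.Quotient.mk I r = 0 := by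
      have := congrArg e hz
      rwa [LinearEquiv.apply_symm_apply, map_zero] at this
    exact Ideal.Quotient.eq_zero_iff_mem.mp h2
  have gen : ∀ z : R, z * c ∈ J → ∃ t u : R, z = t * y + u * c ^ 2 := by
    intro z hz
    have hker : (I : Submodule R R) ≤ LinearMap.ker
        ((J : Ideal R).mkQ ∘ₗ LinearMap.toSpanSingleton R R z) := by
      rw [hI, Ideal.span, Submodule.span_le]
      rintro w rfl
      simp only [SetLike.mem_coe, LinearMap.mem_ker, LinearMap.comp_apply,
        LinearMap.toSpanSingleton_apply, Submodule.mkQ_apply]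
      rw [smul_eq_mul]
      refine (Submodule.Quotient.mk_eq_zero _).mpr ?_
      rwa [mul_comm]
    set φ : (R ⧸ I) →ₗ[R] (R ⧸ J) := Submodule.liftQ I _ hker with hφ
    obtain ⟨t, ht⟩ := Ideal.Quotient.mk_surjective (e φ)
    have hφψ : φ = t • ψ := by
      apply e.injective
      rw [map_smul, hψ, LinearEquiv.apply_symm_apply, ← ht, hmk_smul]
    have hval : φ (Ideal.Quotient.mk I 1) = Ideal.Quotient.mk J z := by
      rw [hφ, ← Ideal.Quotient.mk_eq_mk, Submodule.liftQ_apply]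
      simp only [LinearMap.comp_apply, LinearMap.toSpanSingleton_apply, Submodule.mkQ_apply,
        smul_eq_mul, one_mul, Ideal.Quotient.mk_eq_mk]
    rw [hφψ, LinearMap.smul_apply, happ 1, one_mul, ← Ideal.Quotient.mk_eq_mk,
      ← Submodule.Quotient.mk_smul, smul_eq_mul, Ideal.Quotient.mk_eq_mk] at hval
    have hsub : t * y - z ∈ J := by
      rw [← Ideal.Quotient.mk_eq_mk_iff_sub_mem]
      exact hval
    rw [hJ] at hsub
    obtain ⟨u, hu⟩ := Ideal.mem_span_singleton'.mp hsub
    exact ⟨t, -u, by linear_combination hu⟩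
  -- decomposition y = a + d * c
  obtain ⟨d, hd⟩ := Ideal.mem_span_singleton'.mp (hJ ▸ hcy)
  have ha : (y - d * c) * c = 0 := by linear_combination -hd
  -- first use: z = c
  obtain ⟨t, u, htu⟩ := gen c (by
    rw [show c * c = c ^ 2 by ring]
    exact Ideal.subset_span rfl)
  have e1 : (1 - t * d - u * c) * c = t * (y - d * c) := by linear_combination htu
  have e2 : (1 - t * d - u * c) * c ^ 2 = 0 := by linear_combination c * e1 + t * ha
  have e3 : (1 - t * d - u * c) * c = 0 := hstab2 _ e2
  have hw1m : 1 - t * d - u * c ∈ maximalIdeal R := hann _ e3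
  have hsum_unit : t * d + u * c ∉ maximalIdeal R := by
    intro hmem
    have hone : (1 : R) ∈ maximalIdeal R := by
      have := add_mem hw1m hmem
      simpa using this
    exact (Ideal.ne_top_iff_one _).mp (IsLocalRing.maximalIdeal.isMaximal R).ne_top hone
  have htd : t * d ∉ maximalIdeal R := by
    intro hmem
    exact hsum_unit (add_mem hmem ((maximalIdeal R).mul_mem_left u hcm))
  have hdu : IsUnit d := by
    have : IsUnit (t * d) := by
      by_contra hnu
      exact htd ((IsLocalRing.mem_maximalIdeal _).mpr hnu)
    exact isUnit_of_mul_isUnit_right this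
  -- second use: z = y - d * c, conclude a = 0
  obtain ⟨t', u', ht'⟩ := gen (y - d * c) (by rw [ha]; exact J.zero_mem)
  have e4 : (y - d * c) * (1 - t') = (t' * d + u' * c) * c := by linear_combination ht'
  have e5 : (t' * d + u' * c) * c ^ 2 = 0 := by linear_combination (1 - t') * ha - c * e4
  have e6 : (t' * d + u' * c) * c = 0 := hstab2 _ e5
  have hm5 : t' * d + u' * c ∈ maximalIdeal R := hann _ e6
  have ht'd : t' * d ∈ maximalIdeal R := by
    have := sub_mem hm5 ((maximalIdeal R).mul_mem_left u' hcm)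
    simpa using this
  have ht'm : t' ∈ maximalIdeal R := by
    obtain ⟨dv, hdv⟩ := hdu
    have heq : t' = (t' * d) * ((dv⁻¹ : Rˣ) : R) := by
      rw [mul_assoc, ← hdv, Units.mul_inv, mul_one]
    rw [heq]
    exact (maximalIdeal R).mul_mem_right _ ht'd
  have h1t' : IsUnit (1 - t') := by
    by_contra hnu
    have : (1 : R) - t' ∈ maximalIdeal R := (IsLocalRing.mem_maximalIdeal _).mpr hnu
    have hone : (1 : R) ∈ maximalIdeal R := by
      have := add_mem this ht'm
      simpa using this
    exact (Ideal.ne_top_iff_one _).mp (IsLocalRing.maximalIdeal.isMaximal R).ne_top hone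
  have e7 : (y - d * c) * (1 - t') = 0 := by rw [e4, e6]
  have hy_eq : y = d * c := by
    have h8 := (h1t'.mul_left_eq_zero).mp e7
    linear_combination h8
  -- final use: z = x
  have hbx : b * x = 0 := by
    have hbm' := hbm
    rw [hx, Submodule.mem_colon_singleton, Submodule.mem_bot, smul_eq_mul] at hbm'
    exact hbm'
  have hxc : x * c = 0 := by
    obtain ⟨M, hM⟩ : ∃ M, N = M + 1 := ⟨N - 1, by omega⟩
    rw [hc, hM, pow_succ]
    linear_combination b ^ M * hbx
  obtain ⟨t'', u'', ht''⟩ := gen x (by rw [hxc]; exact J.zero_mem)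
  have e8 : (t'' * d + u'' * c) * c ^ 2 = 0 := by
    linear_combination hxc - c * ht'' - t'' * c * hy_eq
  have e9 : (t'' * d + u'' * c) * c = 0 := hstab2 _ e8
  have : x = 0 := by linear_combination ht'' + t'' * hy_eq + e9
  exact hx0 this
end
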